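/- Let $f:(\mathbb{R}^4)^2 \to \mathbb{R}^4$ be defined by $(f(\gamma,\xi))_i = \frac{\sum_{j\neq i}\gamma_j\xi_j}{3\sum_j \gamma_j\xi_j}$. Let $\alpha,\beta$ be probability vectors on $[4]$ with all entries in $[1/6,1/3]$, each entry either $1/3$ or at most $11/36$, at most one entry equal to $1/3$, and such that $\alpha_i = 1/3 \iff \beta_i = 1/3$ for all $i$. Let $\gamma$ be a probability vector on $[4]$ with entries in $[1/6,1/3]$, each entry either $1/3$ or at most $11/36$, and at most one entry equal to $1/3$. Then $\|f(\alpha,\gamma) - f(\beta,\gamma)\|_1 \leq \frac{24}{49}\|\alpha-\beta\|_1$. -/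

import Mathlib

private lemma chord_aux (x : ℝ) (h1 : 1/6 ≤ x) (h2 : x ≤ 11/36) :
    (x - 1/4)^2 ≤ -(1/36)*(x - 1/4) + 1/216 := by
  nlinarith [mul_nonneg (by linarith : (0:ℝ) ≤ x - 1/6) (by linarith : (0:ℝ) ≤ 11/36 - x)]

private lemma sq_bound (x : Fin 4 → ℝ) (hsum : ∑ i, x i = 1)
    (hb : ∀ i, 1/6 ≤ x i ∧ x i ≤ 1/3)
    (h' : ∀ i, x i = 1/3 ∨ x i ≤ 11/36)
    (h1 : (Finset.univ.filter (fun i => x i = (1/3 : ℝ))).card ≤ 1) :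
    ∑ i, (x i - 1/4)^2 ≤ 5/216 := by
  classical
  have key : ∀ i, (x i - 1/4)^2 ≤ -(1/36)*(x i - 1/4) + 1/216
      + (if x i = (1/3 : ℝ) then (1/216 : ℝ) else 0) := by
    intro i
    by_cases h : x i = (1/3 : ℝ)
    · rw [if_pos h, h]; norm_num
    · rw [if_neg h]
      have := chord_aux (x i) (hb i).1 ((h' i).resolve_left h)
      linarith
  have hind : ∑ i, (if x i = (1/3 : ℝ) then (1/216 : ℝ) else 0) ≤ 1/216 := by
    rw [Finset.sum_ite, Finset.sum_const, Finset.sum_const_zero, add_zero, nsmul_eq_mul]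
    calc ((Finset.univ.filter (fun i => x i = (1/3 : ℝ))).card : ℝ) * (1/216)
        ≤ 1 * (1/216) := by
          apply mul_le_mul_of_nonneg_right _ (by norm_num)
          exact_mod_cast h1
      _ = 1/216 := by norm_num
  have hsle := Finset.sum_le_sum (fun i (_ : i ∈ Finset.univ) => key i)
  have hsplit : ∑ i, (-(1/36)*(x i - 1/4) + 1/216
        + (if x i = (1/3 : ℝ) then (1/216 : ℝ) else 0))
      = (∑ i, (-(1/36)*(x i - 1/4) + 1/216))
        + ∑ i, (if x i = (1/3 : ℝ) then (1/216 : ℝ) else 0) :=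
    Finset.sum_add_distrib
  have hsum4 : x 0 + x 1 + x 2 + x 3 = 1 := by simpa [Fin.sum_univ_four] using hsum
  have hlin : ∑ i, (-(1/36)*(x i - 1/4) + 1/216) = 4/216 := by
    simp only [Fin.sum_univ_four]; linarith
  linarith

private lemma inner_lb (x g : Fin 4 → ℝ)
    (hxsum : ∑ i, x i = 1) (hgsum : ∑ i, g i = 1)
    (hxb : ∀ i, 1/6 ≤ x i ∧ x i ≤ 1/3) (hgb : ∀ i, 1/6 ≤ g i ∧ g i ≤ 1/3)
    (hx' : ∀ i, x i = 1/3 ∨ x i ≤ 11/36) (hg' : ∀ i, g i = 1/3 ∨ g i ≤ 11/36)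
    (hx1 : (Finset.univ.filter (fun i => x i = (1/3 : ℝ))).card ≤ 1)
    (hg1 : (Finset.univ.filter (fun i => g i = (1/3 : ℝ))).card ≤ 1) :
    (49:ℝ)/216 ≤ ∑ i, x i * g i := by
  have hx2 := sq_bound x hxsum hxb hx' hx1
  have hg2 := sq_bound g hgsum hgb hg' hg1
  have hcs := Finset.sum_mul_sq_le_sq_mul_sq Finset.univ
      (fun i => x i - 1/4) (fun i => g i - 1/4)
  have hx2n : (0:ℝ) ≤ ∑ i, (x i - 1/4)^2 := Finset.sum_nonneg fun i _ => sq_nonneg _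
  have hg2n : (0:ℝ) ≤ ∑ i, (g i - 1/4)^2 := Finset.sum_nonneg fun i _ => sq_nonneg _
  have hx4 : x 0 + x 1 + x 2 + x 3 = 1 := by simpa [Fin.sum_univ_four] using hxsum
  have hg4 : g 0 + g 1 + g 2 + g 3 = 1 := by simpa [Fin.sum_univ_four] using hgsum
  have hprod : ∑ i, (x i - 1/4) * (g i - 1/4) = (∑ i, x i * g i) - 1/4 := by
    simp only [Fin.sum_univ_four]
    linear_combination (-(1/4:ℝ)) * hx4 + (-(1/4:ℝ)) * hg4
  have hsq : (∑ i, (x i - 1/4) * (g i - 1/4))^2 ≤ (5/216 : ℝ)^2 := by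
    calc (∑ i, (x i - 1/4) * (g i - 1/4))^2
        ≤ (∑ i, (x i - 1/4)^2) * (∑ i, (g i - 1/4)^2) := hcs
      _ ≤ (5/216 : ℝ)^2 := by nlinarith
  nlinarith [hsq, hprod]

open scoped Classical in
theorem stmt_18 (α β γ : Fin 4 → ℝ)
    (hαsum : ∑ i, α i = 1) (hβsum : ∑ i, β i = 1) (hγsum : ∑ i, γ i = 1)
    (hαb : ∀ i, 1 / 6 ≤ α i ∧ α i ≤ 1 / 3)
    (hβb : ∀ i, 1 / 6 ≤ β i ∧ β i ≤ 1 / 3)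
    (hγb : ∀ i, 1 / 6 ≤ γ i ∧ γ i ≤ 1 / 3)
    (hα' : ∀ i, α i = 1 / 3 ∨ α i ≤ 11 / 36)
    (hβ' : ∀ i, β i = 1 / 3 ∨ β i ≤ 11 / 36)
    (hγ' : ∀ i, γ i = 1 / 3 ∨ γ i ≤ 11 / 36)
    (hα1 : (Finset.univ.filter (fun i => α i = (1 / 3 : ℝ))).card ≤ 1)
    (hβ1 : (Finset.univ.filter (fun i => β i = (1 / 3 : ℝ))).card ≤ 1)
    (hγ1 : (Finset.univ.filter (fun i => γ i = (1 / 3 : ℝ))).card ≤ 1)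
    (hcoupled : ∀ i, α i = 1 / 3 ↔ β i = 1 / 3) :
    ∑ i, |(∑ j ∈ Finset.univ.filter (fun j => j ≠ i), α j * γ j) /
            (3 * ∑ j, α j * γ j) -
          (∑ j ∈ Finset.univ.filter (fun j => j ≠ i), β j * γ j) /
            (3 * ∑ j, β j * γ j)| ≤
      (24 / 49) * ∑ i, |α i - β i| := by
  set S := ∑ j, α j * γ j with hS
  set T := ∑ j, β j * γ j with hT
  have hS49 : (49:ℝ)/216 ≤ S := inner_lb α γ hαsum hγsum hαb hγb hα' hγ' hα1 hγ1
  have hT49 : (49:ℝ)/216 ≤ T := inner_lb β γ hβsum hγsum hβb hγb hβ' hγ' hβ1 hγ1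
  have hSpos : (0:ℝ) < S := lt_of_lt_of_le (by norm_num) hS49
  have hTpos : (0:ℝ) < T := lt_of_lt_of_le (by norm_num) hT49
  have hfα : ∀ i : Fin 4, ∑ j ∈ Finset.univ.filter (fun j => j ≠ i), α j * γ j
      = S - α i * γ i := by
    intro i
    rw [Finset.filter_ne', Finset.sum_erase_eq_sub (Finset.mem_univ i)]
  have hfβ : ∀ i : Fin 4, ∑ j ∈ Finset.univ.filter (fun j => j ≠ i), β j * γ j
      = T - β i * γ i := by
    intro i
    rw [Finset.filter_ne', Finset.sum_erase_eq_sub (Finset.mem_univ i)]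
  have hd0 : ∑ i, (α i - β i) = 0 := by
    rw [Finset.sum_sub_distrib, hαsum, hβsum]; ring
  have hST : S - T = ∑ j, (γ j - 1/3) * (α j - β j) := by
    have e1 : S - T = ∑ j, γ j * (α j - β j) := by
      rw [hS, hT, ← Finset.sum_sub_distrib]
      exact Finset.sum_congr rfl fun j _ => by ring
    have e2 : ∑ j, (γ j - 1/3) * (α j - β j)
        = (∑ j, γ j * (α j - β j)) - (1/3) * ∑ j, (α j - β j) := by
      rw [Finset.mul_sum, ← Finset.sum_sub_distrib]
      exact Finset.sum_congr rfl fun j _ => by ring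
    rw [e1, e2, hd0]; ring
  have hubound : |S - T| ≤ ∑ j, (1/3 - γ j) * |α j - β j| := by
    rw [hST]
    calc |∑ j, (γ j - 1/3) * (α j - β j)|
        ≤ ∑ j, |(γ j - 1/3) * (α j - β j)| := Finset.abs_sum_le_sum_abs _ _
      _ = ∑ j, (1/3 - γ j) * |α j - β j| := by
          refine Finset.sum_congr rfl fun j _ => ?_
          rw [abs_mul, abs_of_nonpos (by linarith [(hγb j).2] : γ j - 1/3 ≤ 0)]
          ring
  have hterm : ∀ i : Fin 4, |(S - α i * γ i)/(3*S) - (T - β i * γ i)/(3*T)|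
      ≤ (γ i * (T * |α i - β i| + β i * |S - T|)) / (3*S*T) := by
    intro i
    have hγi : (0:ℝ) ≤ γ i := le_trans (by norm_num) (hγb i).1
    have hβi : (0:ℝ) ≤ β i := le_trans (by norm_num) (hβb i).1
    have heq : (S - α i * γ i)/(3*S) - (T - β i * γ i)/(3*T)
        = (γ i * (β i * (S - T) - (α i - β i) * T)) / (3*S*T) := by
      field_simp
      ring
    rw [heq, abs_div, abs_of_pos (by positivity : (0:ℝ) < 3*S*T)]
    gcongr
    calc |γ i * (β i * (S - T) - (α i - β i) * T)|
        = γ i * |β i * (S - T) - (α i - β i) * T| := by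
          rw [abs_mul, abs_of_nonneg hγi]
      _ ≤ γ i * (T * |α i - β i| + β i * |S - T|) := by
          apply mul_le_mul_of_nonneg_left _ hγi
          calc |β i * (S - T) - (α i - β i) * T|
              ≤ |β i * (S - T)| + |(α i - β i) * T| := by
                rw [sub_eq_add_neg]
                exact (abs_add_le _ _).trans (by rw [abs_neg])
            _ = β i * |S - T| + |α i - β i| * T := by
                rw [abs_mul, abs_mul, abs_of_nonneg hβi, abs_of_nonneg (le_of_lt hTpos)]
            _ = T * |α i - β i| + β i * |S - T| := by ring
  have hγβT : ∑ i, γ i * β i = T := by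
    rw [hT]; exact Finset.sum_congr rfl fun i _ => mul_comm _ _
  have step2 : ∑ i, γ i * (T * |α i - β i| + β i * |S - T|)
      = T * (∑ i, γ i * |α i - β i|) + |S - T| * T := by
    calc ∑ i, γ i * (T * |α i - β i| + β i * |S - T|)
        = ∑ i, (T * (γ i * |α i - β i|) + |S - T| * (γ i * β i)) :=
          Finset.sum_congr rfl fun i _ => by ring
      _ = T * (∑ i, γ i * |α i - β i|) + |S - T| * (∑ i, γ i * β i) := by
          rw [Finset.sum_add_distrib, ← Finset.mul_sum, ← Finset.mul_sum]
      _ = T * (∑ i, γ i * |α i - β i|) + |S - T| * T := by rw [hγβT]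
  have step3 : ∑ i, γ i * |α i - β i| + |S - T| ≤ (1/3) * ∑ i, |α i - β i| := by
    have h1 : ∑ i, γ i * |α i - β i| + ∑ i, (1/3 - γ i) * |α i - β i|
        = (1/3) * ∑ i, |α i - β i| := by
      rw [← Finset.sum_add_distrib, Finset.mul_sum]
      exact Finset.sum_congr rfl fun i _ => by ring
    linarith
  have hD : (0:ℝ) ≤ ∑ i, |α i - β i| := Finset.sum_nonneg fun i _ => abs_nonneg _
  calc ∑ i, |(∑ j ∈ Finset.univ.filter (fun j => j ≠ i), α j * γ j) / (3 * S) -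
          (∑ j ∈ Finset.univ.filter (fun j => j ≠ i), β j * γ j) / (3 * T)|
      = ∑ i, |(S - α i * γ i)/(3*S) - (T - β i * γ i)/(3*T)| := by
        refine Finset.sum_congr rfl fun i _ => ?_
        rw [hfα i, hfβ i]
    _ ≤ ∑ i, (γ i * (T * |α i - β i| + β i * |S - T|)) / (3*S*T) :=
        Finset.sum_le_sum fun i _ => hterm i
    _ = (∑ i, γ i * (T * |α i - β i| + β i * |S - T|)) / (3*S*T) := by
        rw [Finset.sum_div]
    _ = (∑ i, γ i * |α i - β i| + |S - T|) / (3*S) := by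
        rw [step2]
        field_simp
    _ ≤ ((1/3) * ∑ i, |α i - β i|) / (3*S) := by gcongr
    _ ≤ (24 / 49) * ∑ i, |α i - β i| := by
        rw [div_le_iff₀ (by positivity)]
        nlinarith [mul_le_mul_of_nonneg_left hS49 hD]
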